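/- Let G be the group with presentation ⟨σ₁, σ₂ ∣ σ₁σ₂σ₁σ₂ = σ₂σ₁σ₂σ₁, (σ₁σ₂)² = 1⟩ (the quotient of the braid group of type B₂ by its center) and let φ : G → K be a group homomorphism into a group K. If the two elements φ(σ₁) and φ(σ₂σ₁σ₂⁻¹) of K freely generate a free subgroup of rank 2 (i.e., the group homomorphism from the free group on two generators sending the generators to these two elements is injective), then φ is injective. -/

import Mathlib

def B2QuotRels : Set (FreeGroup (Fin 2)) :=
  { (FreeGroup.of 0 * FreeGroup.of 1) ^ 2 * ((FreeGroup.of 1 * FreeGroup.of 0) ^ 2)⁻¹,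
    (FreeGroup.of 0 * FreeGroup.of 1) ^ 2 }

namespace B2Aux

abbrev F := FreeGroup (Fin 2)
abbrev Fx : F := FreeGroup.of 0
abbrev Fy : F := FreeGroup.of 1

/-- The automorphism by which `t` acts on the free subgroup. -/
def A : F →* F := FreeGroup.lift ![Fx * Fy * Fx⁻¹, Fx * Fy⁻¹ * Fx * Fy * Fx⁻¹]

@[simp] lemma A_x : A Fx = Fx * Fy * Fx⁻¹ := by simp [A]
@[simp] lemma A_y : A Fy = Fx * Fy⁻¹ * Fx * Fy * Fx⁻¹ := by simp [A]

lemma AA : A.comp A = MonoidHom.id F := by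
  ext i
  fin_cases i <;> simp [A] <;> group

def eAut : MulAut F := MonoidHom.toMulEquiv A A AA AA

@[simp] lemma eAut_apply (n : F) : eAut n = A n := rfl

lemma eAut_sq : eAut * eAut = 1 := by
  ext n
  have := DFunLike.congr_fun AA n
  simpa using this

abbrev C2 := Multiplicative (ZMod 2)
abbrev t0 : C2 := Multiplicative.ofAdd 1

lemma C2_cases : ∀ g : C2, g = 1 ∨ g = t0 := by decide

lemma t0_mul_t0 : (t0 * t0 : C2) = 1 := by decide

/-- hom out of C2 determined by an element of order dividing 2 -/
def homC2 {H : Type*} [Group H] (h : H) (hh : h * h = 1) : C2 →* H where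
  toFun g := if g = 1 then 1 else h
  map_one' := if_pos rfl
  map_mul' a b := by
    rcases C2_cases a with ha | ha <;> rcases C2_cases b with hb | hb <;>
      subst ha <;> subst hb <;> simp [t0_mul_t0, hh]

@[simp] lemma homC2_t0 {H : Type*} [Group H] (h : H) (hh : h * h = 1) :
    homC2 h hh t0 = h := by
  have : homC2 h hh t0 = if (t0 : C2) = 1 then 1 else h := rfl
  rw [this, if_neg (by decide)]

def tw : C2 →* MulAut F := homC2 eAut eAut_sq

abbrev M := SemidirectProduct F C2 tw

@[simp] lemma tw_t0_apply (n : F) : tw t0 n = A n := by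
  rw [show tw t0 = eAut from homC2_t0 _ _]; rfl

abbrev G := PresentedGroup B2QuotRels
abbrev ga : G := PresentedGroup.of 0
abbrev gb : G := PresentedGroup.of 1

lemma hrelG : (ga * gb) * (ga * gb) = 1 := by
  have hm : ((Fx * Fy : F) ^ 2) ∈ Subgroup.normalClosure B2QuotRels :=
    Subgroup.subset_normalClosure (Set.mem_insert_iff.mpr (Or.inr rfl))
  have h := (QuotientGroup.eq_one_iff ((Fx * Fy : F) ^ 2)).mpr hm
  have e1 : PresentedGroup.mk B2QuotRels ((Fx * Fy) ^ 2) = (ga * gb) * (ga * gb) := by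
    rw [sq, map_mul, map_mul]; rfl
  rw [← e1]; exact h

lemma h1 : gb * ga * gb = ga⁻¹ := by
  calc gb * ga * gb = ga⁻¹ * ((ga * gb) * (ga * gb)) := by group
  _ = ga⁻¹ := by rw [hrelG, mul_one]

lemma hcnj : gb * ga * gb⁻¹ = ga⁻¹ * gb⁻¹ * gb⁻¹ := by
  calc gb * ga * gb⁻¹ = (gb * ga * gb) * gb⁻¹ * gb⁻¹ := by group
  _ = ga⁻¹ * gb⁻¹ * gb⁻¹ := by rw [h1]

/-- the generators' images in `M` -/
def fM : Fin 2 → M := ![SemidirectProduct.inl Fx, SemidirectProduct.inl Fx⁻¹ * SemidirectProduct.inr t0]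

open SemidirectProduct in
lemma fM_rels : ∀ r ∈ B2QuotRels, FreeGroup.lift fM r = 1 := by
  have key01 : (fM 0 * fM 1 : M) = inr t0 := by
    simp only [fM, Matrix.cons_val_zero, Matrix.cons_val_one, Matrix.head_cons]
    rw [← mul_assoc, ← map_mul, mul_inv_cancel, map_one, one_mul]
  have key01sq : (fM 0 * fM 1) * (fM 0 * fM 1) = 1 := by
    rw [key01, ← map_mul, t0_mul_t0, map_one]
  have key10 : (fM 1 * fM 0 : M) = inl (Fy * Fx⁻¹) * inr t0 := by
    simp only [fM, Matrix.cons_val_zero, Matrix.cons_val_one, Matrix.head_cons]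
    ext
    · simp
      group
    · simp
  have key10sq : (fM 1 * fM 0) * (fM 1 * fM 0) = 1 := by
    rw [key10]
    ext
    · simp
    · simp [t0_mul_t0]
  intro r hr
  rcases hr with h | h <;> subst h <;>
    simp only [map_mul, map_pow, map_inv, FreeGroup.lift_apply_of, sq]
  · rw [key01sq, key10sq]; simp
  · exact key01sq

/-- the map `G →* M` -/
def theta : G →* M := PresentedGroup.toGroup fM_rels

@[simp] lemma theta_of0 : theta (PresentedGroup.of 0) = SemidirectProduct.inl Fx :=
  PresentedGroup.toGroup.of fM_rels

@[simp] lemma theta_of1 :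
    theta (PresentedGroup.of 1) = SemidirectProduct.inl Fx⁻¹ * SemidirectProduct.inr t0 :=
  PresentedGroup.toGroup.of fM_rels

def f1G : F →* G := FreeGroup.lift ![ga, gb * ga * gb⁻¹]

@[simp] lemma f1G_x : f1G Fx = ga := by simp [f1G]
@[simp] lemma f1G_y : f1G Fy = gb * ga * gb⁻¹ := by simp [f1G]

def f2G : C2 →* G := homC2 (ga * gb) hrelG

lemma compatG : ∀ g : C2, f1G.comp (tw g).toMonoidHom =
    (MulAut.conj (f2G g)).toMonoidHom.comp f1G := by
  intro g
  rcases C2_cases g with h | h <;> subst h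
  · ext i
    simp
  · ext i
    fin_cases i
    · show f1G (tw t0 Fx) = MulAut.conj (f2G t0) (f1G Fx)
      rw [tw_t0_apply, A_x, show f2G t0 = ga * gb from homC2_t0 _ _,
        MulAut.conj_apply]
      simp only [map_mul, map_inv, f1G_x, f1G_y]
      group
    · show f1G (tw t0 Fy) = MulAut.conj (f2G t0) (f1G Fy)
      rw [tw_t0_apply, A_y, show f2G t0 = ga * gb from homC2_t0 _ _,
        MulAut.conj_apply]
      simp only [map_mul, map_inv, f1G_x, f1G_y]
      rw [hcnj]
      calc ga * (ga⁻¹ * gb⁻¹ * gb⁻¹)⁻¹ * ga * (ga⁻¹ * gb⁻¹ * gb⁻¹) * ga⁻¹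
          = ga * gb * (gb * ga * gb) * (gb⁻¹ * gb⁻¹ * gb⁻¹) * ga⁻¹ := by
            simp [mul_assoc]
        _ = ga * gb * ga⁻¹ * (gb⁻¹ * gb⁻¹ * gb⁻¹) * ga⁻¹ := by rw [h1]
        _ = ga * gb * (ga⁻¹ * gb⁻¹ * gb⁻¹) * (ga * gb)⁻¹ := by group

def iota : M →* G := SemidirectProduct.lift f1G f2G compatG

@[simp] lemma iota_inl (n : F) : iota (SemidirectProduct.inl n) = f1G n :=
  SemidirectProduct.lift_inl _ _ _ _

@[simp] lemma iota_inr (c : C2) : iota (SemidirectProduct.inr c) = f2G c :=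
  SemidirectProduct.lift_inr _ _ _ _

lemma iota_theta : ∀ g : G, iota (theta g) = g := by
  intro g
  have : iota.comp theta = MonoidHom.id G := by
    apply PresentedGroup.ext
    intro i
    fin_cases i
    · simp [iota]
    · show iota (theta (PresentedGroup.of 1)) = PresentedGroup.of 1
      simp only [MonoidHom.comp_apply, MonoidHom.id_apply, theta_of1, map_mul, iota,
        SemidirectProduct.lift_inl, SemidirectProduct.lift_inr, map_inv, f1G_x,
        show f2G t0 = ga * gb from homC2_t0 _ _]
      group
  exact DFunLike.congr_fun this g

end B2Aux

theorem stmt_1 {K : Type*} [Group K] (φ : PresentedGroup B2QuotRels →* K)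
    (hfree : Function.Injective (FreeGroup.lift
      (![φ (PresentedGroup.of 0),
         φ (PresentedGroup.of 1 * PresentedGroup.of 0 * (PresentedGroup.of 1)⁻¹)] :
        Fin 2 → K))) :
    Function.Injective φ := by
  open B2Aux in
  set L : FreeGroup (Fin 2) →* K := FreeGroup.lift
      (![φ (PresentedGroup.of 0),
         φ (PresentedGroup.of 1 * PresentedGroup.of 0 * (PresentedGroup.of 1)⁻¹)] :
        Fin 2 → K) with hLdef
  rw [injective_iff_map_eq_one]
  intro g hg
  have hφf1 : φ.comp f1G = L := by
    apply FreeGroup.ext_hom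
    intro i
    fin_cases i <;> simp [f1G, hLdef]
  have hφa : φ ga = L Fx := by
    have := DFunLike.congr_fun hφf1 Fx; simpa using this
  have hφy : φ (gb * ga * gb⁻¹) = L Fy := by
    have := DFunLike.congr_fun hφf1 Fy; simpa using this
  have hg2 : φ (iota (theta g)) = 1 := by rw [iota_theta]; exact hg
  set n : F := (theta g).left with hn
  set c : C2 := (theta g).right with hc
  rw [← SemidirectProduct.inl_left_mul_inr_right (theta g), map_mul, map_mul, ← hn, ← hc,
    iota_inl, iota_inr] at hg2
  have hLn : φ (f1G n) = L n := DFunLike.congr_fun hφf1 n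
  rw [hLn] at hg2
  rcases C2_cases c with h | h
  · rw [h, map_one, map_one, mul_one] at hg2
    have hn1 : n = 1 := hfree (by rw [map_one]; exact hg2)
    have hth : theta g = 1 := by
      rw [← SemidirectProduct.inl_left_mul_inr_right (theta g), ← hn, ← hc, hn1, h]
      simp
    have := iota_theta g
    rw [hth, map_one] at this
    exact this.symm
  · exfalso
    rw [h, show f2G t0 = ga * gb from homC2_t0 _ _] at hg2
    have hd : φ (ga * gb) = (L n)⁻¹ := by
      exact eq_inv_of_mul_eq_one_right hg2
    have cid : (ga * gb) * ga * (ga * gb)⁻¹ = ga * (gb * ga * gb⁻¹) * ga⁻¹ := by group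
    have hK2 : L (n⁻¹ * Fx * n) = L (Fx * Fy * Fx⁻¹) := by
      rw [map_mul, map_mul, map_inv, map_mul, map_mul, map_inv]
      calc (L n)⁻¹ * L Fx * L n
          = (L n)⁻¹ * φ ga * ((L n)⁻¹)⁻¹ := by rw [hφa, inv_inv]
        _ = φ (ga * gb) * φ ga * (φ (ga * gb))⁻¹ := by rw [hd]
        _ = φ ((ga * gb) * ga * (ga * gb)⁻¹) := by simp only [map_mul, map_inv]
        _ = φ (ga * (gb * ga * gb⁻¹) * ga⁻¹) := by rw [cid]
        _ = L Fx * L Fy * (L Fx)⁻¹ := by rw [map_mul, map_mul, map_inv, hφa, hφy]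
    have hw : n⁻¹ * Fx * n = Fx * Fy * Fx⁻¹ := hfree hK2
    set ν : FreeGroup (Fin 2) →* Multiplicative ℤ :=
      FreeGroup.lift ![Multiplicative.ofAdd (1 : ℤ), 1] with hν
    have hν2 := congrArg ν hw
    simp only [map_mul, map_inv, hν, FreeGroup.lift_apply_of, Matrix.cons_val_zero,
      Matrix.cons_val_one, Matrix.head_cons, mul_one, one_mul, inv_one,
      inv_mul_cancel_comm, mul_inv_cancel_right, mul_inv_cancel] at hν2
    -- hν2 should now be an absurd equality in Multiplicative ℤ
    exact absurd hν2 (by decide)
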